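/- Let n ≥ 3 and let f ∈ 𝔫* satisfy f(E_{i,i+2}) ≠ 0 for every 1 ≤ i ≤ n − 2. Then rk B_f ≥ 2⌊(n−1)/2⌋. -/

import Mathlib

open Matrix

/-- The Lie algebra `𝔫` of strictly upper triangular `n × n` matrices over `F`,
as a submodule of the matrix space. -/
def strictUpper (F : Type*) [Field F] (n : ℕ) : Submodule F (Matrix (Fin n) (Fin n) F) where
  carrier := {x | ∀ i j : Fin n, j ≤ i → x i j = 0}
  add_mem' := by
    intro x y hx hy i j hij
    show x i j + y i j = 0
    rw [hx i j hij, hy i j hij, add_zero]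
  zero_mem' := by intro i j _; rfl
  smul_mem' := by
    intro c x hx i j hij
    show c * x i j = 0
    rw [hx i j hij, mul_zero]

lemma mul_mem_strictUpper {F : Type*} [Field F] {n : ℕ} {x y : Matrix (Fin n) (Fin n) F}
    (hx : x ∈ strictUpper F n) (hy : y ∈ strictUpper F n) : x * y ∈ strictUpper F n := by
  intro i j hji
  rw [Matrix.mul_apply]
  refine Finset.sum_eq_zero fun k _ => ?_
  rcases le_or_gt k i with h | h
  · rw [hx i k h, zero_mul]
  · rw [hy k j (hji.trans h.le), mul_zero]

/-- The Lie bracket (commutator) on `𝔫`, as a bilinear map. -/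
def commBracket (F : Type*) [Field F] (n : ℕ) :
    strictUpper F n →ₗ[F] strictUpper F n →ₗ[F] strictUpper F n :=
  LinearMap.mk₂ F
    (fun x y => ⟨(x : Matrix (Fin n) (Fin n) F) * y - (y : Matrix (Fin n) (Fin n) F) * x,
      sub_mem (mul_mem_strictUpper x.2 y.2) (mul_mem_strictUpper y.2 x.2)⟩)
    (fun x x' y => by
      apply Subtype.ext
      show ((x : Matrix (Fin n) (Fin n) F) + x') * y - (y : Matrix (Fin n) (Fin n) F) * (x + x')
          = ((x : Matrix (Fin n) (Fin n) F) * y - (y : Matrix (Fin n) (Fin n) F) * x)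
            + ((x' : Matrix (Fin n) (Fin n) F) * y - (y : Matrix (Fin n) (Fin n) F) * x')
      noncomm_ring)
    (fun c x y => by
      apply Subtype.ext
      show (c • (x : Matrix (Fin n) (Fin n) F)) * y - (y : Matrix (Fin n) (Fin n) F) * (c • x)
          = c • ((x : Matrix (Fin n) (Fin n) F) * y - (y : Matrix (Fin n) (Fin n) F) * x)
      rw [smul_mul_assoc, mul_smul_comm, smul_sub])
    (fun x y y' => by
      apply Subtype.ext
      show (x : Matrix (Fin n) (Fin n) F) * (y + y') - ((y : Matrix (Fin n) (Fin n) F) + y') * x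
          = ((x : Matrix (Fin n) (Fin n) F) * y - (y : Matrix (Fin n) (Fin n) F) * x)
            + ((x : Matrix (Fin n) (Fin n) F) * y' - (y' : Matrix (Fin n) (Fin n) F) * x)
      noncomm_ring)
    (fun c x y => by
      apply Subtype.ext
      show (x : Matrix (Fin n) (Fin n) F) * (c • y) - (c • (y : Matrix (Fin n) (Fin n) F)) * x
          = c • ((x : Matrix (Fin n) (Fin n) F) * y - (y : Matrix (Fin n) (Fin n) F) * x)
      rw [smul_mul_assoc, mul_smul_comm, smul_sub])

/-- The elementary matrix `E_{ij}` (with `i < j`) as an element of `𝔫`. -/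
def Eelt (F : Type*) [Field F] (n : ℕ) (i j : Fin n) (h : i < j) : strictUpper F n :=
  ⟨Matrix.single i j 1, by
    intro a b hba
    refine Matrix.single_apply_of_ne i j 1 a b ?_
    rintro ⟨rfl, rfl⟩
    exact absurd h (not_lt.mpr hba)⟩

/-- The rank of the alternating bilinear form `B_f(x, y) = f([x, y])` on `𝔫`,
i.e. the rank of the linear map `𝔫 → 𝔫*`, `x ↦ B_f(x, ·)`. -/
noncomputable def rkB (F : Type*) [Field F] (n : ℕ) (f : Module.Dual F (strictUpper F n)) : ℕ :=
  Module.finrank F (LinearMap.range (LinearMap.compr₂ (commBracket F n) f))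

lemma bracket_Eelt_of_ne {F : Type*} [Field F] {n : ℕ} {a b c d : Fin n}
    (hab : a < b) (hcd : c < d) (h1 : b ≠ c) (h2 : d ≠ a) :
    commBracket F n (Eelt F n a b hab) (Eelt F n c d hcd) = 0 := by
  apply Subtype.ext
  show Matrix.single a b (1:F) * Matrix.single c d 1
      - Matrix.single c d 1 * Matrix.single a b 1 = _
  rw [Matrix.single_mul_single_of_ne (c := (1:F)) a b c h1 (1:F),
    Matrix.single_mul_single_of_ne (c := (1:F)) c d a h2 (1:F), sub_zero]
  rfl

lemma bracket_Eelt_same {F : Type*} [Field F] {n : ℕ} {a b d : Fin n}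
    (hab : a < b) (hbd : b < d) (h2 : d ≠ a) :
    commBracket F n (Eelt F n a b hab) (Eelt F n b d hbd) = Eelt F n a d (hab.trans hbd) := by
  apply Subtype.ext
  show Matrix.single a b (1:F) * Matrix.single b d 1
      - Matrix.single b d 1 * Matrix.single a b 1 = _
  rw [Matrix.single_mul_single_same, Matrix.single_mul_single_of_ne (c := (1:F)) b d a h2 (1:F), sub_zero, one_mul]
  rfl

lemma bracket_skew {F : Type*} [Field F] {n : ℕ} (x y : strictUpper F n) :
    commBracket F n x y = - commBracket F n y x := by
  apply Subtype.ext
  show (x : Matrix (Fin n) (Fin n) F) * y - (y : Matrix (Fin n) (Fin n) F) * x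
      = -((y : Matrix (Fin n) (Fin n) F) * x - (x : Matrix (Fin n) (Fin n) F) * y)
  exact (neg_sub _ _).symm

/-- If `f (E_{i,i+2}) ≠ 0` for every `i`, then `rk B_f ≥ 2⌊(n-1)/2⌋`. -/
theorem rkB_ge_of_superdiag (F : Type*) [Field F] [IsAlgClosed F] [CharZero F]
    (n : ℕ) (hn : 3 ≤ n) (f : Module.Dual F (strictUpper F n))
    (hf : ∀ (i : Fin n) (h2 : (i : ℕ) + 2 < n),
      f (Eelt F n i ⟨(i : ℕ) + 2, h2⟩ (by simp only [Fin.lt_def, Fin.val_mk]; omega)) ≠ 0) :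
    2 * ((n - 1) / 2) ≤ rkB F n f := by
  classical
  set m := (n - 1) / 2 with hm
  have hmn : 2 * m + 1 ≤ n := by omega
  set L := LinearMap.compr₂ (commBracket F n) f with hL
  -- the standard basis vectors we use
  let x : Fin m → strictUpper F n := fun k =>
    Eelt F n ⟨2 * k, by have := k.2; omega⟩ ⟨2 * k + 1, by have := k.2; omega⟩
      (by rw [Fin.mk_lt_mk]; omega)
  let y : Fin m → strictUpper F n := fun k =>
    Eelt F n ⟨2 * k + 1, by have := k.2; omega⟩ ⟨2 * k + 2, by have := k.2; omega⟩
      (by rw [Fin.mk_lt_mk]; omega)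
  let w : Fin m ⊕ Fin m → strictUpper F n := Sum.elim x y
  -- bracket computations
  have hxx : ∀ k l : Fin m, f (commBracket F n (x k) (x l)) = 0 := by
    intro k l
    rw [bracket_Eelt_of_ne _ _ (by simp [Fin.ext_iff]; omega) (by simp [Fin.ext_iff]; omega),
      map_zero]
  have hyy : ∀ k l : Fin m, f (commBracket F n (y k) (y l)) = 0 := by
    intro k l
    rw [bracket_Eelt_of_ne _ _ (by simp [Fin.ext_iff]; omega) (by simp [Fin.ext_iff]; omega),
      map_zero]
  have hxy_lt : ∀ k l : Fin m, k < l → f (commBracket F n (x k) (y l)) = 0 := by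
    intro k l hkl
    rw [bracket_Eelt_of_ne _ _
      (by simp only [ne_eq, Fin.mk.injEq]; omega)
      (by simp only [ne_eq, Fin.mk.injEq]; omega), map_zero]
  have hxy_diag : ∀ k : Fin m, f (commBracket F n (x k) (y k)) ≠ 0 := by
    intro k
    rw [bracket_Eelt_same _ _ (by simp only [ne_eq, Fin.mk.injEq]; omega)]
    have h2 : ((⟨2 * k, by have := k.2; omega⟩ : Fin n) : ℕ) + 2 < n := by
      have := k.2; simp only [Fin.val_mk]; omega
    exact hf ⟨2 * k, by have := k.2; omega⟩ h2
  -- the Gram-type matrices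
  set M : Matrix (Fin m) (Fin m) F :=
    Matrix.of (fun k l => f (commBracket F n (x k) (y l))) with hMdef
  set N : Matrix (Fin m) (Fin m) F :=
    Matrix.of (fun k l => f (commBracket F n (y k) (x l))) with hNdef
  have hNM : ∀ k l, N k l = - M l k := by
    intro k l
    show f (commBracket F n (y k) (x l)) = - f (commBracket F n (x l) (y k))
    rw [bracket_skew, map_neg]
  have hM0 : ∀ i j : Fin m, i < j → M i j = 0 := fun i j h => hxy_lt i j h
  have hMdiag : ∀ k : Fin m, M k k ≠ 0 := fun k => hxy_diag k
  have hN0 : ∀ i j : Fin m, j < i → N i j = 0 := fun i j h => by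
    rw [hNM, hM0 j i h, neg_zero]
  have hdetM : M.det ≠ 0 := by
    rw [Matrix.det_of_lowerTriangular M (fun i j hij => hM0 i j (by exact hij))]
    exact Finset.prod_ne_zero_iff.mpr fun k _ => hMdiag k
  have hdetN : N.det ≠ 0 := by
    rw [Matrix.det_of_upperTriangular (M := N) (fun i j hij => hN0 i j (by exact hij))]
    refine Finset.prod_ne_zero_iff.mpr fun k _ => ?_
    rw [hNM]
    exact neg_ne_zero.mpr (hMdiag k)
  set G : Matrix (Fin m ⊕ Fin m) (Fin m ⊕ Fin m) F := Matrix.fromBlocks M 0 0 N with hGdef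
  have hdetG : G.det ≠ 0 := by
    rw [hGdef, Matrix.det_fromBlocks_zero₂₁]
    exact mul_ne_zero hdetM hdetN
  -- linear independence of the images
  have hli : LinearIndependent F (fun i : Fin m ⊕ Fin m => L (w i)) := by
    rw [Fintype.linearIndependent_iff]
    intro c hc
    have hc' : ∀ j : Fin m ⊕ Fin m,
        ∑ i : Fin m ⊕ Fin m, c i * f (commBracket F n (w i) (w j)) = 0 := by
      intro j
      have h2 := congrArg (fun φ : Module.Dual F (strictUpper F n) => φ (w j)) hc
      simpa [L, LinearMap.sum_apply, LinearMap.smul_apply, smul_eq_mul,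
        LinearMap.compr₂_apply] using h2
    have hvec : Matrix.vecMul c G = 0 := by
      funext j
      show ∑ i, c i * G i j = 0
      cases j with
      | inl l =>
        have h3 := hc' (Sum.inr l)
        rw [Fintype.sum_sum_type] at h3 ⊢
        simp only [hGdef, Matrix.fromBlocks_apply₁₁, Matrix.fromBlocks_apply₂₁,
          Matrix.zero_apply, mul_zero, Finset.sum_const_zero, add_zero]
        simp only [w, Sum.elim_inl, Sum.elim_inr, hyy, mul_zero,
          Finset.sum_const_zero, add_zero] at h3
        exact h3
      | inr l =>
        have h3 := hc' (Sum.inl l)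
        rw [Fintype.sum_sum_type] at h3 ⊢
        simp only [hGdef, Matrix.fromBlocks_apply₁₂, Matrix.fromBlocks_apply₂₂,
          Matrix.zero_apply, mul_zero, Finset.sum_const_zero, zero_add]
        simp only [w, Sum.elim_inl, Sum.elim_inr, hxx, mul_zero,
          Finset.sum_const_zero, zero_add] at h3
        exact h3
    have := Matrix.eq_zero_of_vecMul_eq_zero hdetG hvec
    exact fun i => congrFun this i
  -- conclude the rank bound
  have hspan : Submodule.span F (Set.range fun i : Fin m ⊕ Fin m => L (w i))
      ≤ LinearMap.range L := by
    rw [Submodule.span_le]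
    rintro _ ⟨i, rfl⟩
    exact LinearMap.mem_range_self L (w i)
  calc 2 * m = Fintype.card (Fin m ⊕ Fin m) := by simp [two_mul]
    _ = Module.finrank F
        (Submodule.span F (Set.range fun i : Fin m ⊕ Fin m => L (w i))) :=
          (finrank_span_eq_card hli).symm
    _ ≤ Module.finrank F (LinearMap.range L) := Submodule.finrank_mono hspan
    _ = rkB F n f := rfl
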